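/- Determinant–trace inequality: suppose x₁,…,x_t ∈ ℝ^d satisfy ‖x_s‖₂ ≤ L for all 1 ≤ s ≤ t, let λ ≥ 0, and let V = λI_d + Σ_{s=1}^t x_s x_sᵀ. Then det(V) ≤ (λ + t·L²/d)^d. -/

import Mathlib

open Matrix

lemma aux_dot (n : Type*) [Fintype n] (u y : n → ℝ) :
    dotProduct y (vecMulVec u u *ᵥ y) = (dotProduct u y) ^ 2 := by
  simp only [dotProduct, vecMulVec, mulVec, of_apply, sq, Finset.sum_mul, Finset.mul_sum]
  rw [Finset.sum_comm]
  congr 1; ext i; congr 1; ext j; ring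

lemma aux_tr_eig {n : Type*} [Fintype n] [DecidableEq n]
    {A : Matrix n n ℝ} (hA : A.IsHermitian) :
    A.trace = ∑ i, hA.eigenvalues i := by
  nth_rewrite 1 [hA.spectral_theorem]
  rw [Unitary.conjStarAlgAut_apply, Matrix.trace_mul_cycle, Unitary.coe_star_mul_self]
  simp [trace_diagonal]

theorem determinant_trace_inequality
    (d t : ℕ) (lam L : ℝ) (hlam : 0 ≤ lam)
    (x : ℕ → Fin d → ℝ) (hx : ∀ s < t, Real.sqrt (∑ j, (x s j) ^ 2) ≤ L) :
    (lam • (1 : Matrix (Fin d) (Fin d) ℝ)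
        + ∑ s ∈ Finset.range t, Matrix.vecMulVec (x s) (x s)).det
      ≤ (lam + t * L ^ 2 / d) ^ d := by
  rcases Nat.eq_zero_or_pos d with hd | hd
  · subst hd
    simp [Matrix.det_fin_zero]
  set V := lam • (1 : Matrix (Fin d) (Fin d) ℝ)
      + ∑ s ∈ Finset.range t, Matrix.vecMulVec (x s) (x s) with hVdef
  have hherm : V.IsHermitian := by
    rw [Matrix.IsHermitian, hVdef, conjTranspose_add, conjTranspose_smul,
      conjTranspose_sum]
    congr 1
    · rw [isHermitian_one.eq]; simp
    · refine Finset.sum_congr rfl fun s _ => ?_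
      ext i j
      simp [conjTranspose_apply, vecMulVec_apply, mul_comm]
  have hpsd : V.PosSemidef := by
    refine .of_dotProduct_mulVec_nonneg hherm fun y => ?_
    have hy : star y = y := by simp
    rw [hy, hVdef, add_mulVec, dotProduct_add]
    have hsum : (∑ s ∈ Finset.range t, vecMulVec (x s) (x s)) *ᵥ y
        = ∑ s ∈ Finset.range t, vecMulVec (x s) (x s) *ᵥ y :=
      map_sum (Matrix.mulVec.addMonoidHomLeft y) _ _
    have h2 : dotProduct y (∑ s ∈ Finset.range t, vecMulVec (x s) (x s) *ᵥ y)
        = ∑ s ∈ Finset.range t, dotProduct y (vecMulVec (x s) (x s) *ᵥ y) := by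
      simp only [dotProduct, Finset.sum_apply, Finset.mul_sum]
      rw [Finset.sum_comm]
    rw [hsum, h2]
    have h1 : dotProduct y ((lam • (1 : Matrix (Fin d) (Fin d) ℝ)) *ᵥ y)
        = lam * dotProduct y y := by
      simp [smul_mulVec, dotProduct_smul]
    rw [h1]
    refine add_nonneg (mul_nonneg hlam (by simpa [dotProduct] using Finset.sum_nonneg (fun j _ => mul_self_nonneg (y j)) : (0:ℝ) ≤ dotProduct y y)) ?_
    refine Finset.sum_nonneg fun s _ => ?_
    rw [aux_dot]
    positivity
  have heig : ∀ i, 0 ≤ hherm.eigenvalues i := hpsd.eigenvalues_nonneg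
  -- trace bound
  have hL : ∀ s < t, ∑ j, (x s j) ^ 2 ≤ L ^ 2 := by
    intro s hs
    have h := hx s hs
    have h0 : 0 ≤ ∑ j, (x s j) ^ 2 := Finset.sum_nonneg fun j _ => sq_nonneg _
    nlinarith [Real.sq_sqrt h0, Real.sqrt_nonneg (∑ j, (x s j) ^ 2)]
  have htr : V.trace ≤ d * lam + t * L ^ 2 := by
    rw [hVdef, trace_add, trace_smul, trace_one, trace_sum]
    have : ∀ s ∈ Finset.range t, (vecMulVec (x s) (x s)).trace ≤ L ^ 2 := by
      intro s hs
      rw [Matrix.trace]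
      have : ∑ i, (vecMulVec (x s) (x s)).diag i = ∑ j, (x s j) ^ 2 := by
        simp [Matrix.diag, vecMulVec_apply, sq]
      rw [this]
      exact hL s (Finset.mem_range.mp hs)
    calc lam • (Fintype.card (Fin d) : ℝ) + ∑ s ∈ Finset.range t, (vecMulVec (x s) (x s)).trace
        ≤ lam • (d : ℝ) + ∑ s ∈ Finset.range t, L ^ 2 := by
          rw [Fintype.card_fin]
          exact add_le_add le_rfl (Finset.sum_le_sum this)
      _ = d * lam + t * L ^ 2 := by
          rw [Finset.sum_const, Finset.card_range]
          simp only [smul_eq_mul, nsmul_eq_mul]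
          ring
  -- AM-GM
  have hdet : V.det = ∏ i, hherm.eigenvalues i := by
    rw [hherm.det_eq_prod_eigenvalues]; norm_num
  have hsum : ∑ i : Fin d, ((d : ℝ)⁻¹) = 1 := by
    rw [Finset.sum_const, Finset.card_univ, Fintype.card_fin, nsmul_eq_mul]
    field_simp
  have hamgm := Real.geom_mean_le_arith_mean_weighted Finset.univ
    (fun _ => (d : ℝ)⁻¹) hherm.eigenvalues
    (fun i _ => by positivity) hsum (fun i _ => heig i)
  have hdpos : (0:ℝ) < d := by exact_mod_cast hd
  have hrw : ∏ i, hherm.eigenvalues i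
      = (∏ i, hherm.eigenvalues i ^ ((d : ℝ)⁻¹)) ^ d := by
    rw [← Finset.prod_pow]
    refine Finset.prod_congr rfl fun i _ => ?_
    rw [← Real.rpow_natCast (hherm.eigenvalues i ^ ((d:ℝ)⁻¹)) d,
        ← Real.rpow_mul (heig i)]
    rw [inv_mul_cancel₀ (ne_of_gt hdpos), Real.rpow_one]
  have hprod_nonneg : 0 ≤ ∏ i, hherm.eigenvalues i ^ ((d : ℝ)⁻¹) :=
    Finset.prod_nonneg fun i _ => Real.rpow_nonneg (heig i) _
  have hstep : (∏ i, hherm.eigenvalues i ^ ((d : ℝ)⁻¹)) ^ d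
      ≤ (lam + t * L ^ 2 / d) ^ d := by
    apply pow_le_pow_left₀ hprod_nonneg
    calc ∏ i, hherm.eigenvalues i ^ ((d : ℝ)⁻¹)
        ≤ ∑ i, (d : ℝ)⁻¹ * hherm.eigenvalues i := hamgm
      _ = (d : ℝ)⁻¹ * V.trace := by rw [aux_tr_eig hherm, Finset.mul_sum]
      _ ≤ (d : ℝ)⁻¹ * (d * lam + t * L ^ 2) := by
          exact mul_le_mul_of_nonneg_left htr (by positivity)
      _ = lam + t * L ^ 2 / d := by field_simp
  rw [hdet, hrw]
  exact hstep
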